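/- Let Q be a stably supported quantale with support ς and unit e, and let a, b ∈ Q. If b ≤ e, b ≤ a a*, and a ≤ b a, then b = ς a. -/
import Mathlib

private lemma sup_pres_mono {Q : Type*} [CompleteLattice Q] (f : Q → Q)
    (hf : ∀ T : Set Q, f (sSup T) = sSup (f '' T)) :
    Monotone f := by
  intro x y hxy
  have h := hf {x, y}
  rw [sSup_pair, sup_eq_right.mpr hxy, Set.image_pair, sSup_pair] at h
  rw [h]; exact le_sup_left

/-- In a stably supported quantale, the support is characterized by
`b ≤ e`, `b ≤ a a*`, `a ≤ b a` (Lemma `prop:strongsupp`-1). -/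
theorem stmt_3 {Q : Type*} [CompleteLattice Q]
    (m : Q → Q → Q) (e : Q) (st : Q → Q) (sp : Q → Q)
    (hassoc : ∀ a b c : Q, m (m a b) c = m a (m b c))
    (hdistl : ∀ (a : Q) (T : Set Q), m a (sSup T) = sSup ((fun b => m a b) '' T))
    (hdistr : ∀ (b : Q) (T : Set Q), m (sSup T) b = sSup ((fun a => m a b) '' T))
    (hel : ∀ a : Q, m e a = a) (her : ∀ a : Q, m a e = a)
    (hstsup : ∀ T : Set Q, st (sSup T) = sSup (st '' T))
    (hstst : ∀ a : Q, st (st a) = a)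
    (hstm : ∀ a b : Q, st (m a b) = m (st b) (st a))
    (hspsup : ∀ T : Set Q, sp (sSup T) = sSup (sp '' T))
    (hsp1 : ∀ a : Q, sp a ≤ e)
    (hsp2 : ∀ a : Q, sp a ≤ m a (st a))
    (hsp3 : ∀ a : Q, a ≤ m (sp a) a)
    (hstable : ∀ a b : Q, sp (m a b) ≤ sp a)
    (a b : Q) (h1 : b ≤ e) (h2 : b ≤ m a (st a)) (h3 : a ≤ m b a) :
    b = sp a := by
  have stmono : Monotone st := sup_pres_mono st hstsup
  have spmono : Monotone sp := sup_pres_mono sp hspsup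
  have mmonol : ∀ c : Q, Monotone (fun x => m x c) := fun c => sup_pres_mono _ (fun T => hdistr c T)
  have mmonor : ∀ c : Q, Monotone (m c) := fun c => sup_pres_mono _ (fun T => hdistl c T)
  -- st e = e
  have hste : st e = e := by
    have h4 : ∀ c : Q, m (st c) (st e) = st c := by
      intro c
      have := hstm e c
      rw [hel] at this; exact this.symm
    have h5 : m e (st e) = e := by
      have := h4 (st e)
      rwa [hstst] at this
    rw [hel] at h5; exact h5
  apply le_antisymm
  · -- b ≤ sp b ≤ sp (m a (st a)) ≤ sp a
    have hb : b ≤ sp b := by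
      calc b ≤ m (sp b) b := hsp3 b
        _ ≤ m (sp b) e := mmonor (sp b) h1
        _ = sp b := her _
    calc b ≤ sp b := hb
      _ ≤ sp (m a (st a)) := spmono h2
      _ ≤ sp a := hstable a (st a)
  · -- sp a ≤ sp (m b a) ≤ sp b ≤ b
    have hspb : sp b ≤ b := by
      calc sp b ≤ m b (st b) := hsp2 b
        _ ≤ m b (st e) := mmonor b (stmono h1)
        _ = b := by rw [hste, her]
    calc sp a ≤ sp (m b a) := spmono h3
      _ ≤ sp b := hstable b a
      _ ≤ b := hspb
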